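/- For a continuous function φ of exponential order and s, τ > 0, one has M_{ρ,m}[φ](s,τ) = (1/τ) · L[ t ↦ φ(t)/((t^m/τ^m) + τ^m)^ρ ](s/τ), i.e. the M-transform equals (1/τ) times the Laplace transform of φ(t)/((t^m/τ^m)+τ^m)^ρ evaluated at s/τ. -/

import Mathlib

open MeasureTheory Set

/-- M_{ρ,m}[φ](s,τ) = (1/τ) L[t ↦ φ(t)/((t^m/τ^m)+τ^m)^ρ](s/τ). -/
theorem Mtransform_eq_inv_tau_laplace
    (ρ : ℂ) (hρ : 0 ≤ ρ.re) (m : ℕ) (hm : 0 < m) (φ : ℝ → ℂ)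
    (hφ : Continuous φ)
    (K γ : ℝ) (hK : 0 < K) (hγ : 0 < γ)
    (hexp : ∀ t ≥ (0:ℝ), ‖φ t‖ ≤ K * Real.exp (t / γ))
    (s τ : ℝ) (hs : 0 < s) (hτ : 0 < τ) :
    (∫ t in Ioi (0:ℝ), (Real.exp (-(s * t)) : ℂ) * φ (τ * t) /
        (((t ^ m + τ ^ m : ℝ) : ℂ) ^ ρ))
      = (1 / (τ : ℂ)) *
        ∫ t in Ioi (0:ℝ), (Real.exp (-(s / τ * t)) : ℂ) *
          (φ t / (((t ^ m / τ ^ m + τ ^ m : ℝ) : ℂ) ^ ρ)) := by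
  have key := integral_comp_mul_left_Ioi
    (fun t : ℝ => (Real.exp (-(s / τ * t)) : ℂ) *
      (φ t / (((t ^ m / τ ^ m + τ ^ m : ℝ) : ℂ) ^ ρ))) 0 hτ
  rw [mul_zero] at key
  have hτm : (τ : ℝ) ^ m ≠ 0 := pow_ne_zero _ hτ.ne'
  have hL : (∫ t in Ioi (0:ℝ), (Real.exp (-(s * t)) : ℂ) * φ (τ * t) /
        (((t ^ m + τ ^ m : ℝ) : ℂ) ^ ρ))
      = ∫ t in Ioi (0:ℝ), (Real.exp (-(s / τ * (τ * t))) : ℂ) *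
          (φ (τ * t) / ((((τ * t) ^ m / τ ^ m + τ ^ m : ℝ) : ℂ) ^ ρ)) := by
    refine setIntegral_congr_fun measurableSet_Ioi (fun t ht => ?_)
    have h1 : s / τ * (τ * t) = s * t := by field_simp
    have h2 : (τ * t) ^ m / τ ^ m = t ^ m := by
      rw [mul_pow]; field_simp [mul_comm]
    rw [h1, h2, add_comm (t^m) (τ^m)]
    rw [add_comm (τ^m) (t^m)]
    ring
  rw [hL, key, Complex.real_smul, Complex.ofReal_inv, one_div]
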